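/- Let λ̄ < 0, t₀ > 0 and 0 < ε < 1, and define φ : [0, t₀) → ℝ by φ(t) = (1 − ε)·exp[ (λ̄ t₀² / (1 − ε)) · ( 1/(t₀ − t) − 1/t₀ ) ] + ε. If |λ̄| t₀ / (1 − ε) > 2, then |φ'(t)| ≤ |λ̄| for every t ∈ [0, t₀). -/

import Mathlib

/-- Uniform derivative bound for the explicit warping function: if
`|λ̄|t₀/(1−ε) > 2` then `|φ'(t)| ≤ |λ̄|` for every `t ∈ [0, t₀)`. -/
theorem stmt_11 (lam t₀ ε : ℝ) (hlam : lam < 0) (ht₀ : 0 < t₀) (hε0 : 0 < ε) (hε1 : ε < 1)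
    (φ : ℝ → ℝ)
    (hφ : ∀ t, φ t =
      (1 - ε) * Real.exp ((lam * t₀ ^ 2 / (1 - ε)) * (1 / (t₀ - t) - 1 / t₀)) + ε)
    (hbig : |lam| * t₀ / (1 - ε) > 2) :
    ∀ t ∈ Set.Ico 0 t₀, |deriv φ t| ≤ |lam| := by
  intro t ht
  obtain ⟨ht0, htlt⟩ := ht
  have hε : (0:ℝ) < 1 - ε := by linarith
  have hr : 0 < t₀ - t := by linarith
  have hrne : t₀ - t ≠ 0 := ne_of_gt hr
  set c : ℝ := lam * t₀ ^ 2 / (1 - ε) with hc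
  -- derivative computation
  have h1 : HasDerivAt (fun s : ℝ => t₀ - s) (-1) t := by
    simpa using (hasDerivAt_id t).const_sub t₀
  have h2 : HasDerivAt (fun s : ℝ => (t₀ - s)⁻¹) (1 / (t₀ - t) ^ 2) t := by
    have := h1.fun_inv hrne
    simpa [neg_div] using this
  have h3 : HasDerivAt (fun s : ℝ => c * ((t₀ - s)⁻¹ - t₀⁻¹)) (c * (1 / (t₀ - t) ^ 2)) t := by
    exact ((h2.sub_const t₀⁻¹).const_mul c)
  have h4 : HasDerivAt (fun s : ℝ => (1 - ε) * Real.exp (c * ((t₀ - s)⁻¹ - t₀⁻¹)) + ε)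
      ((1 - ε) * (Real.exp (c * ((t₀ - t)⁻¹ - t₀⁻¹)) * (c * (1 / (t₀ - t) ^ 2)))) t := by
    exact ((h3.exp.const_mul (1 - ε)).add_const ε)
  have hφeq : φ = fun s : ℝ => (1 - ε) * Real.exp (c * ((t₀ - s)⁻¹ - t₀⁻¹)) + ε := by
    funext s
    rw [hφ s]
    simp [one_div, hc]
  have hderiv : deriv φ t =
      (1 - ε) * (Real.exp (c * ((t₀ - t)⁻¹ - t₀⁻¹)) * (c * (1 / (t₀ - t) ^ 2))) := by
    rw [hφeq]; exact h4.deriv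
  set E : ℝ := c * ((t₀ - t)⁻¹ - t₀⁻¹) with hE
  -- key inequality: t₀ ^ 2 * exp E ≤ (t₀ - t) ^ 2
  have hL : 0 < |lam| := abs_pos.mpr (ne_of_lt hlam)
  have hlamabs : |lam| = -lam := abs_of_neg hlam
  set u : ℝ := t₀ / (t₀ - t) with hu
  have hu1 : 1 ≤ u := by
    rw [hu, le_div_iff₀ hr]; linarith
  have hmE : -E = (|lam| * t₀ / (1 - ε)) * (u - 1) := by
    rw [hE, hc, hu, hlamabs]
    field_simp
  have hexpmE : u ^ 2 ≤ Real.exp (-E) := by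
    have h5 : u ≤ Real.exp (u - 1) := by
      have := Real.add_one_le_exp (u - 1)
      linarith
    have h6 : u ^ 2 ≤ Real.exp (2 * (u - 1)) := by
      have : Real.exp (2 * (u - 1)) = Real.exp (u - 1) ^ 2 := by
        rw [two_mul, Real.exp_add, sq]
      rw [this]
      have hu0 : 0 ≤ u := by linarith
      exact pow_le_pow_left₀ hu0 h5 2
    have h7 : 2 * (u - 1) ≤ -E := by
      rw [hmE]
      have : (0:ℝ) ≤ u - 1 := by linarith
      nlinarith [hbig]
    exact h6.trans (Real.exp_le_exp.mpr h7)
  have hkey : t₀ ^ 2 * Real.exp E ≤ (t₀ - t) ^ 2 := by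
    have hu2 : u ^ 2 = t₀ ^ 2 / (t₀ - t) ^ 2 := by rw [hu, div_pow]
    have hexpE : Real.exp E = (Real.exp (-E))⁻¹ := by
      rw [← Real.exp_neg]; ring_nf
    rw [hexpE]
    rw [hu2] at hexpmE
    have hEpos : 0 < Real.exp (-E) := Real.exp_pos _
    rw [div_le_iff₀ (by positivity)] at hexpmE
    rw [mul_inv_le_iff₀ hEpos]
    nlinarith
  -- finish
  rw [hderiv]
  have hcneg : c < 0 := by
    exact div_neg_of_neg_of_pos (mul_neg_of_neg_of_pos hlam (by positivity)) hε
  have habs : |(1 - ε) * (Real.exp E * (c * (1 / (t₀ - t) ^ 2)))| =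
      (1 - ε) * Real.exp E * (-c) * (1 / (t₀ - t) ^ 2) := by
    rw [abs_mul, abs_mul, abs_mul, abs_of_pos hε, abs_of_pos (Real.exp_pos E),
      abs_of_neg hcneg, abs_of_pos (by positivity : (0:ℝ) < 1 / (t₀ - t) ^ 2)]
    ring
  rw [habs]
  have hcval : -c = |lam| * t₀ ^ 2 / (1 - ε) := by
    rw [hc, hlamabs]; field_simp
  rw [hcval]
  have hr2 : 0 < (t₀ - t) ^ 2 := by positivity
  rw [show (1 - ε) * Real.exp E * (|lam| * t₀ ^ 2 / (1 - ε)) * (1 / (t₀ - t) ^ 2)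
      = |lam| * (t₀ ^ 2 * Real.exp E) / (t₀ - t) ^ 2 by field_simp]
  rw [div_le_iff₀ hr2]
  nlinarith [hkey, hL.le]
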